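/- Let q be a prime, 0 ≤ p < q, and 0 < α < 1. Let Fₙ(q,p) = {x ∈ {0,1}^ℕ : d_{qⁿ−2}(x) ≡ p (mod q)} for n ≥ 1. Then μ_α(⋃_{n=1}^∞ Fₙ(q,p)) = 1; that is, almost every path x passes, for some n, through a vertex at level qⁿ − 2 whose binomial coefficient is congruent to p modulo q. -/

import Mathlib

open MeasureTheory Filter

/-- `kₙ(x)`: the number of `1`s among the first `n` coordinates of the path `x`. -/
def kpath (x : ℕ → Bool) (n : ℕ) : ℕ :=
  ((Finset.range n).filter (fun i => x i = true)).card

/-- `dₙ(x) = C(n, kₙ(x))`: the binomial coefficient at the `n`-th vertex of the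
path in Pascal's triangle determined by `x`. -/
def dpath (n : ℕ) (x : ℕ → Bool) : ℕ := n.choose (kpath x n)

/-- `μ` is the Bernoulli product measure `μ_α` on `{0,1}^ℕ`: it is a probability
measure under which the coordinates are i.i.d. with probability `α` of being `1`. -/
def IsBernoulli (α : ℝ) (μ : Measure (ℕ → Bool)) : Prop :=
  IsProbabilityMeasure μ ∧
    ∀ (s : Finset ℕ) (y : ℕ → Bool),
      μ {x : ℕ → Bool | ∀ i ∈ s, x i = y i} =
        ∏ i ∈ s, (if y i = true then ENNReal.ofReal α else ENNReal.ofReal (1 - α))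

/-- `Fₙ(q,p)`: the set of paths whose binomial coefficient at level `qⁿ − 2`
is congruent to `p` modulo `q`. -/
def F (q n p : ℕ) : Set (ℕ → Bool) :=
  {x : ℕ → Bool | ((dpath (q ^ n - 2) x : ℕ) : ZMod q) = (p : ZMod q)}

open Finset
open scoped Classical ENNReal

/-- parity helper -/
lemma negpow_mul_q {q : ℕ} (hq : q.Prime) (s : ℕ) :
    ((-1 : ZMod q)) ^ (q * s) = (-1) ^ s := by
  rcases hq.eq_two_or_odd' with h | h
  · subst h
    have : (-1 : ZMod 2) = 1 := by decide
    simp [this]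
  · rw [pow_mul, h.neg_one_pow]

lemma choose_q_sub_one {q : ℕ} (hq : q.Prime) :
    ∀ a, a < q → (((q - 1).choose a : ℕ) : ZMod q) = (-1) ^ a := by
  haveI := Fact.mk hq
  intro a
  induction a with
  | zero => intro _; simp
  | succ a ih =>
    intro ha
    have ha' : a < q := by omega
    have key := Nat.choose_succ_right_eq (q - 1) a
    have hcast : (((q-1).choose (a+1) * (a+1) : ℕ) : ZMod q)
        = (((q-1).choose a * (q - 1 - a) : ℕ) : ZMod q) := by rw [key]
    push_cast at hcast
    rw [ih ha'] at hcast
    have hq2 : 2 ≤ q := hq.two_le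
    have hsub : ((q - 1 - a : ℕ) : ZMod q) = -1 - a := by
      have h1 : (q - 1 - a) + (a + 1) = q := by omega
      have : (((q - 1 - a) + (a + 1) : ℕ) : ZMod q) = (q : ZMod q) := by rw [h1]
      push_cast at this
      rw [ZMod.natCast_self] at this
      linear_combination this
    rw [hsub] at hcast
    have hunit : ((a + 1 : ℕ) : ZMod q) ≠ 0 := by
      rw [Ne, ZMod.natCast_eq_zero_iff]
      intro hdvd
      exact absurd (Nat.le_of_dvd (by omega) hdvd) (by omega)
    have : (((q-1).choose (a+1) : ℕ) : ZMod q) * ((a:ZMod q) + 1) = (-1)^(a+1) * ((a:ZMod q)+1) := by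
      push_cast at hunit ⊢
      rw [hcast]; ring
    push_cast at hunit
    exact mul_right_cancel₀ hunit this

lemma choose_q_sub_two {q : ℕ} (hq : q.Prime) :
    ∀ a, a ≤ q - 2 → (((q - 2).choose a : ℕ) : ZMod q) = (-1) ^ a * ((a : ZMod q) + 1) := by
  haveI := Fact.mk hq
  have hq2 : 2 ≤ q := hq.two_le
  intro a
  induction a with
  | zero => intro _; simp
  | succ a ih =>
    intro ha
    have ha' : a ≤ q - 2 := by omega
    have key := Nat.choose_succ_right_eq (q - 2) a
    have hcast : (((q-2).choose (a+1) * (a+1) : ℕ) : ZMod q)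
        = (((q-2).choose a * (q - 2 - a) : ℕ) : ZMod q) := by rw [key]
    push_cast at hcast
    rw [ih ha'] at hcast
    have hsub : ((q - 2 - a : ℕ) : ZMod q) = -2 - a := by
      have h1 : (q - 2 - a) + (a + 2) = q := by omega
      have : (((q - 2 - a) + (a + 2) : ℕ) : ZMod q) = (q : ZMod q) := by rw [h1]
      push_cast at this
      rw [ZMod.natCast_self] at this
      linear_combination this
    rw [hsub] at hcast
    have hunit : ((a + 1 : ℕ) : ZMod q) ≠ 0 := by
      rw [Ne, ZMod.natCast_eq_zero_iff]
      intro hdvd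
      exact absurd (Nat.le_of_dvd (by omega) hdvd) (by omega)
    push_cast at hunit
    have step : (((q-2).choose (a+1) : ℕ) : ZMod q) * ((a:ZMod q) + 1)
        = (-1)^(a+1) * (((a:ZMod q)+1) + 1) * ((a:ZMod q)+1) := by
      rw [hcast]; ring
    have := mul_right_cancel₀ hunit step
    rw [this]; push_cast; ring

lemma choose_pow_sub_one {q : ℕ} (hq : q.Prime) :
    ∀ n, ∀ t, t ≤ q ^ n - 1 → (((q ^ n - 1).choose t : ℕ) : ZMod q) = (-1) ^ t := by
  haveI := Fact.mk hq
  have hq2 : 2 ≤ q := hq.two_le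
  intro n
  induction n with
  | zero =>
    intro t ht
    have : t = 0 := by simpa using ht
    subst this; simp
  | succ n ih =>
    intro t ht
    have hqn : 1 ≤ q ^ n := Nat.one_le_pow _ _ (by omega)
    have hqsn : q * q ^ n = q ^ (n+1) := (pow_succ' q n).symm
    have haux : q * ((q ^ n - 1) + 1) = q * (q^n - 1) + q := by ring
    have h1 : (q ^ n - 1) + 1 = q ^ n := by omega
    rw [h1, hqsn] at haux
    have hm : q ^ (n+1) - 1 = q * (q ^ n - 1) + (q - 1) := by omega
    have hmod : (q ^ (n+1) - 1) % q = q - 1 := by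
      rw [hm, Nat.mul_add_mod]; exact Nat.mod_eq_of_lt (by omega)
    have hdiv : (q ^ (n+1) - 1) / q = q ^ n - 1 := by
      rw [hm, Nat.mul_add_div (by omega)]
      simp [Nat.div_eq_of_lt (show q - 1 < q by omega)]
    have lucas := Choose.choose_modEq_choose_mod_mul_choose_div
      (p := q) (n := q^(n+1)-1) (k := t)
    have heq : (((q^(n+1)-1).choose t : ℤ) : ZMod q)
        = ((((q^(n+1)-1) % q).choose (t % q) * (((q^(n+1)-1)/q).choose (t/q)) : ℤ) : ZMod q) :=
      (ZMod.intCast_eq_intCast_iff _ _ _).mpr lucas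
    push_cast at heq
    rw [hmod, hdiv] at heq
    have htq : t / q ≤ q ^ n - 1 := by
      have := Nat.div_le_div_right (c := q) ht
      rwa [hdiv] at this
    rw [choose_q_sub_one hq _ (Nat.mod_lt _ (by omega)), ih _ htq] at heq
    rw [heq, ← pow_add]
    have : q * (t / q) + t % q = t := Nat.div_add_mod t q
    conv_rhs => rw [← this, pow_add, negpow_mul_q hq]
    ring

/-- the "symbol" function -/
def gg (q k : ℕ) : ZMod q := (-1) ^ k * ((k % q : ℕ) + 1)

lemma choose_pow_sub_two {q : ℕ} (hq : q.Prime) (n : ℕ) (hn : 1 ≤ n)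
    (k : ℕ) (hk : k ≤ q ^ n - 2) :
    (((q ^ n - 2).choose k : ℕ) : ZMod q) = gg q k := by
  haveI := Fact.mk hq
  have hq2 : 2 ≤ q := hq.two_le
  obtain ⟨m, rfl⟩ : ∃ m, n = m + 1 := ⟨n - 1, by omega⟩
  have hqn : 1 ≤ q ^ m := Nat.one_le_pow _ _ (by omega)
  have hqsn : q * q ^ m = q ^ (m+1) := (pow_succ' q m).symm
  have haux : q * ((q ^ m - 1) + 1) = q * (q ^ m - 1) + q := by ring
  have h1 : (q ^ m - 1) + 1 = q ^ m := by omega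
  rw [h1, hqsn] at haux
  have hqq : 2 ≤ q ^ (m+1) := by
    calc 2 ≤ q := hq2
    _ ≤ q ^ (m+1) := Nat.le_self_pow (by omega) q
  have hm : q ^ (m+1) - 2 = q * (q ^ m - 1) + (q - 2) := by omega
  have hmod : (q ^ (m+1) - 2) % q = q - 2 := by
    rw [hm, Nat.mul_add_mod]; exact Nat.mod_eq_of_lt (by omega)
  have hdiv : (q ^ (m+1) - 2) / q = q ^ m - 1 := by
    rw [hm, Nat.mul_add_div (by omega)]
    simp [Nat.div_eq_of_lt (show q - 2 < q by omega)]
  have lucas := Choose.choose_modEq_choose_mod_mul_choose_div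
    (p := q) (n := q^(m+1)-2) (k := k)
  have heq : (((q^(m+1)-2).choose k : ℤ) : ZMod q)
      = ((((q^(m+1)-2) % q).choose (k % q) * (((q^(m+1)-2)/q).choose (k/q)) : ℤ) : ZMod q) :=
    (ZMod.intCast_eq_intCast_iff _ _ _).mpr lucas
  push_cast at heq
  rw [hmod, hdiv] at heq
  have htq : k / q ≤ q ^ m - 1 := by
    have := Nat.div_le_div_right (c := q) hk
    rwa [hdiv] at this
  rw [choose_pow_sub_one hq _ _ htq] at heq
  by_cases hcase : k % q ≤ q - 2
  · rw [choose_q_sub_two hq _ hcase] at heq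
    rw [heq, gg]
    have hdm : q * (k / q) + k % q = k := Nat.div_add_mod k q
    have hsplit : (-1 : ZMod q) ^ k = (-1) ^ (k % q) * (-1) ^ (k / q) := by
      conv_lhs => rw [← hdm]
      rw [pow_add, negpow_mul_q hq, mul_comm]
    rw [hsplit]; ring
  · have hk1 : k % q = q - 1 := by have := Nat.mod_lt k (show 0 < q by omega); omega
    have hz : (q - 2).choose (k % q) = 0 := by
      apply Nat.choose_eq_zero_of_lt; omega
    rw [hk1] at hz
    rw [hk1, hz] at heq
    rw [heq, gg, hk1]
    have : (((q - 1 : ℕ) : ZMod q) + 1) = 0 := by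
      have h1 : ((q - 1) + 1 : ℕ) = q := by omega
      have : (((q-1) + 1 : ℕ) : ZMod q) = ((q : ℕ) : ZMod q) := by rw [h1]
      push_cast at this
      rw [ZMod.natCast_self] at this
      linear_combination this
    rw [this]
    push_cast
    ring

lemma gg_mod (q : ℕ) (hq : 2 ≤ q) (k : ℕ) : gg q k = gg q (k % (2 * q)) := by
  unfold gg
  have h1 : k % (2 * q) % q = k % q := Nat.mod_mod_of_dvd k ⟨2, by ring⟩
  rw [h1]
  congr 1
  have hd : k = 2 * q * (k / (2*q)) + k % (2*q) := (Nat.div_add_mod k (2*q)).symm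
  conv_lhs => rw [hd]
  rw [pow_add, pow_mul, pow_mul]
  norm_num

lemma gg_surj {q : ℕ} (hq : q.Prime) (p : ℕ) (hp : p < q) :
    ∃ c < 2 * q, gg q c = (p : ZMod q) := by
  have hq2 : 2 ≤ q := hq.two_le
  rcases Nat.eq_zero_or_pos p with rfl | hpos
  · refine ⟨q - 1, by omega, ?_⟩
    unfold gg
    rw [Nat.mod_eq_of_lt (by omega)]
    have : (((q - 1 : ℕ) : ZMod q) + 1) = 0 := by
      have h1 : ((q - 1) + 1 : ℕ) = q := by omega
      have : (((q-1) + 1 : ℕ) : ZMod q) = ((q : ℕ) : ZMod q) := by rw [h1]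
      push_cast at this
      rw [ZMod.natCast_self] at this
      linear_combination this
    rw [this]
    simp
  · have hmodp : (p - 1) % q = p - 1 := Nat.mod_eq_of_lt (by omega)
    have hcast : (((p - 1 : ℕ) : ZMod q) + 1) = (p : ZMod q) := by
      have h1 : ((p - 1) + 1 : ℕ) = p := by omega
      have : (((p-1) + 1 : ℕ) : ZMod q) = ((p : ℕ) : ZMod q) := by rw [h1]
      push_cast at this
      linear_combination this
    rcases hq.eq_two_or_odd' with h2 | hodd
    · subst h2
      have : p = 1 := by omega
      subst this
      exact ⟨0, by omega, by unfold gg; norm_num⟩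
    · rcases Nat.even_or_odd (p - 1) with he | ho
      · refine ⟨p - 1, by omega, ?_⟩
        unfold gg
        rw [hmodp, hcast, he.neg_one_pow]
        ring
      · refine ⟨p - 1 + q, by omega, ?_⟩
        unfold gg
        have : (p - 1 + q) % q = p - 1 := by
          rw [Nat.add_mod_right]; exact hmodp
        rw [this, hcast, pow_add, ho.neg_one_pow, hodd.neg_one_pow]
        ring


/-- extend a finite pattern by `false` -/
def extv {L : ℕ} (v : Fin L → Bool) : ℕ → Bool :=
  fun i => if h : i < L then v ⟨i, h⟩ else false

/-- weight of a pattern -/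
noncomputable def Wgt (a b : ℝ≥0∞) {L : ℕ} (v : Fin L → Bool) : ℝ≥0∞ :=
  ∏ i : Fin L, (if v i = true then a else b)

/-- number of `true`s in a pattern -/
def cnt {L : ℕ} (v : Fin L → Bool) : ℕ := ∑ i : Fin L, (if v i = true then 1 else 0)

/-- cylinder set -/
def Cyl {L : ℕ} (v : Fin L → Bool) : Set (ℕ → Bool) :=
  {x | ∀ i ∈ Finset.range L, x i = extv v i}

/-- a set determined by the first `L` coordinates -/
def Det (L : ℕ) (A : Set (ℕ → Bool)) : Prop :=
  ∀ x y : ℕ → Bool, (∀ i < L, x i = y i) → (x ∈ A ↔ y ∈ A)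

lemma extv_lt {L : ℕ} (v : Fin L → Bool) {i : ℕ} (h : i < L) :
    extv v i = v ⟨i, h⟩ := dif_pos h

lemma kpath_eq_sum (x : ℕ → Bool) (n : ℕ) :
    kpath x n = ∑ i ∈ Finset.range n, (if x i = true then 1 else 0) := by
  rw [kpath, Finset.card_filter]

lemma kpath_congr {x y : ℕ → Bool} {n : ℕ} (h : ∀ i < n, x i = y i) :
    kpath x n = kpath y n := by
  rw [kpath_eq_sum, kpath_eq_sum]
  exact Finset.sum_congr rfl fun i hi => by rw [h i (Finset.mem_range.mp hi)]

lemma kpath_le (x : ℕ → Bool) (n : ℕ) : kpath x n ≤ n := by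
  calc kpath x n ≤ (Finset.range n).card := Finset.card_filter_le _ _
  _ = n := Finset.card_range n

lemma cnt_eq_kpath {L : ℕ} (v : Fin L → Bool) : cnt v = kpath (extv v) L := by
  rw [kpath_eq_sum, cnt, ← Fin.sum_univ_eq_sum_range]
  exact Finset.sum_congr rfl fun i _ => by rw [extv_lt v i.isLt]

lemma cyl_measurable {L : ℕ} (v : Fin L → Bool) : MeasurableSet (Cyl v) := by
  have : Cyl v = ⋂ i ∈ Finset.range L, {x : ℕ → Bool | x i = extv v i} := by
    ext x; simp [Cyl]
  rw [this]
  refine MeasurableSet.biInter (Finset.range L).countable_toSet (fun i _ => ?_)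
  have h : {x : ℕ → Bool | x i = extv v i} = (fun x : ℕ → Bool => x i) ⁻¹' {extv v i} := rfl
  rw [h]
  exact measurable_pi_apply i (measurableSet_singleton _)

lemma cyl_disjoint {L : ℕ} : Set.PairwiseDisjoint (Set.univ : Set (Fin L → Bool)) Cyl := by
  intro v _ w _ hvw
  refine Set.disjoint_left.mpr fun x hx hx' => hvw (funext fun i => ?_)
  have h1 := hx i.val (Finset.mem_range.mpr i.isLt)
  have h2 := hx' i.val (Finset.mem_range.mpr i.isLt)
  rw [extv_lt v i.isLt] at h1
  rw [extv_lt w i.isLt] at h2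
  rw [← h1, ← h2]

lemma mem_cyl_self {L : ℕ} (x : ℕ → Bool) :
    x ∈ Cyl (fun i : Fin L => x i.val) := by
  intro i hi
  rw [extv_lt _ (Finset.mem_range.mp hi)]

lemma det_eq_biUnion {L : ℕ} {A : Set (ℕ → Bool)} (hA : Det L A) :
    A = ⋃ v ∈ Finset.univ.filter (fun v : Fin L → Bool => extv v ∈ A), Cyl v := by
  ext x
  simp only [Set.mem_iUnion, exists_prop, Finset.mem_filter, Finset.mem_univ, true_and]
  constructor
  · intro hx
    refine ⟨fun i => x i.val, ?_, mem_cyl_self x⟩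
    exact (hA x _ (fun i hi => (extv_lt (fun j : Fin L => x j.val) hi).symm)).mp hx
  · rintro ⟨v, hv, hxv⟩
    refine (hA x (extv v) fun i hi => ?_).mpr hv
    exact hxv i (Finset.mem_range.mpr hi)

lemma det_measurable {L : ℕ} {A : Set (ℕ → Bool)} (hA : Det L A) :
    MeasurableSet A := by
  rw [det_eq_biUnion hA]
  exact (Finset.univ.filter _).measurableSet_biUnion (fun v _ => cyl_measurable v)


noncomputable def indW (a b : ℝ≥0∞) {L : ℕ} (A : Set (ℕ → Bool)) (v : Fin L → Bool) : ℝ≥0∞ :=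
  if extv v ∈ A then Wgt a b v else 0

variable {α : ℝ} {μ : Measure (ℕ → Bool)}

lemma cyl_measure (hμ : IsBernoulli α μ) {L : ℕ} (v : Fin L → Bool) :
    μ (Cyl v) = Wgt (ENNReal.ofReal α) (ENNReal.ofReal (1 - α)) v := by
  rw [Cyl]
  rw [hμ.2 (Finset.range L) (extv v), Wgt]
  rw [← Fin.prod_univ_eq_prod_range (fun i => if extv v i = true then ENNReal.ofReal α
    else ENNReal.ofReal (1 - α)) L]
  exact Finset.prod_congr rfl fun i _ => by rw [extv_lt v i.isLt]

lemma measure_det (hμ : IsBernoulli α μ) {L : ℕ} {A : Set (ℕ → Bool)} (hA : Det L A) :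
    μ A = ∑ v : Fin L → Bool, indW (ENNReal.ofReal α) (ENNReal.ofReal (1 - α)) A v := by
  simp only [indW]
  conv_lhs => rw [det_eq_biUnion hA]
  rw [measure_biUnion_finset (cyl_disjoint.subset (Set.subset_univ _))
    (fun v _ => cyl_measurable v)]
  rw [Finset.sum_filter]
  exact Finset.sum_congr rfl fun v _ => by
    split_ifs with h
    · exact cyl_measure hμ v
    · rfl

lemma Wgt_sum_one {a b : ℝ≥0∞} (hab : a + b = 1) (L : ℕ) :
    ∑ v : Fin L → Bool, Wgt a b v = 1 := by
  have h2 := Fintype.prod_sum (κ := fun _ : Fin L => Bool)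
    (f := fun _ t => if t = true then a else b)
  simp only [Wgt]
  rw [← h2]
  have : ∀ i : Fin L, (∑ t : Bool, if t = true then a else b) = 1 := by
    intro i; rw [Fintype.sum_bool]; simpa using hab
  calc ∏ i : Fin L, (∑ t : Bool, if t = true then a else b)
      = ∏ i : Fin L, (1:ℝ≥0∞) := Finset.prod_congr rfl fun i _ => this i
  _ = 1 := by simp

lemma Wgt_append {a b : ℝ≥0∞} {L d : ℕ} (v : Fin L → Bool) (w : Fin d → Bool) :
    Wgt a b (Fin.append v w) = Wgt a b v * Wgt a b w := by
  rw [Wgt, Fin.prod_univ_add]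
  congr 1
  · exact Finset.prod_congr rfl fun i _ => by rw [Fin.append_left]
  · exact Finset.prod_congr rfl fun i _ => by rw [Fin.append_right]

lemma extv_append_lo {L d : ℕ} (v : Fin L → Bool) (w : Fin d → Bool) {i : ℕ} (h : i < L) :
    extv (Fin.append v w) i = extv v i := by
  rw [extv_lt _ (show i < L + d by omega), extv_lt _ h]
  have : (⟨i, show i < L + d by omega⟩ : Fin (L + d)) = Fin.castAdd d ⟨i, h⟩ := rfl
  rw [this, Fin.append_left]

lemma extv_append_hi {L d : ℕ} (v : Fin L → Bool) (w : Fin d → Bool) {j : ℕ} (h : j < d) :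
    extv (Fin.append v w) (L + j) = w ⟨j, h⟩ := by
  rw [extv_lt _ (show L + j < L + d by omega)]
  have : (⟨L + j, show L + j < L + d by omega⟩ : Fin (L + d)) = Fin.natAdd L ⟨j, h⟩ := rfl
  rw [this, Fin.append_right]

lemma cnt_append {L d : ℕ} (v : Fin L → Bool) (w : Fin d → Bool) :
    cnt (Fin.append v w) = cnt v + cnt w := by
  rw [cnt_eq_kpath, kpath_eq_sum, Finset.sum_range_add]
  congr 1
  · rw [cnt_eq_kpath, kpath_eq_sum]
    exact Finset.sum_congr rfl fun i hi => by
      rw [extv_append_lo v w (Finset.mem_range.mp hi)]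
  · rw [cnt]
    rw [← Fin.sum_univ_eq_sum_range (fun j => if extv (Fin.append v w) (L + j) = true then 1 else 0) d]
    exact Finset.sum_congr rfl fun j _ => by rw [extv_append_hi v w j.isLt]


/-- distribution of the count mod M -/
noncomputable def distr (a b : ℝ≥0∞) (M d : ℕ) (r : ZMod M) : ℝ≥0∞ :=
  ∑ v : Fin d → Bool, if ((cnt v : ZMod M)) = r then Wgt a b v else 0

variable {a b : ℝ≥0∞} {M : ℕ} [NeZero M]

lemma distr_sum_one (hab : a + b = 1) (d : ℕ) :
    ∑ r : ZMod M, distr a b M d r = 1 := by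
  rw [← Wgt_sum_one hab d]
  unfold distr
  rw [Finset.sum_comm]
  exact Finset.sum_congr rfl fun v _ => by rw [Finset.sum_ite_eq _ _ (fun _ => Wgt a b v)]; simp

lemma sum_pred_cnt_eq (P : ZMod M → Prop) [DecidablePred P] (d : ℕ) :
    ∑ v : Fin d → Bool, (if P ((cnt v : ZMod M)) then Wgt a b v else 0)
      = ∑ r ∈ Finset.univ.filter P, distr a b M d r := by
  have swap : ∀ v : Fin d → Bool, (if P ((cnt v : ZMod M)) then Wgt a b v else 0)
      = ∑ r : ZMod M, if ((cnt v : ZMod M)) = r then (if P r then Wgt a b v else 0) else 0 := by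
    intro v
    rw [Finset.sum_ite_eq Finset.univ ((cnt v : ZMod M)) (fun r => if P r then Wgt a b v else 0)]
    simp
  rw [Finset.sum_congr rfl fun v _ => swap v, Finset.sum_comm, Finset.sum_filter]
  refine Finset.sum_congr rfl fun r _ => ?_
  by_cases h : P r
  · rw [if_pos h]
    unfold distr
    exact Finset.sum_congr rfl fun v _ => by rw [if_pos h]
  · rw [if_neg h]
    exact Finset.sum_eq_zero fun v _ => by simp [if_neg h]

lemma cnt_cons {d : ℕ} (t : Bool) (w : Fin d → Bool) :
    cnt (Fin.cons t w) = (if t = true then 1 else 0) + cnt w := by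
  unfold cnt
  rw [Fin.sum_univ_succ]
  simp

lemma Wgt_cons {d : ℕ} (t : Bool) (w : Fin d → Bool) :
    Wgt a b (Fin.cons t w) = (if t = true then a else b) * Wgt a b w := by
  unfold Wgt
  rw [Fin.prod_univ_succ]
  simp

lemma distr_succ (d : ℕ) (r : ZMod M) :
    distr a b M (d+1) r = b * distr a b M d r + a * distr a b M d (r - 1) := by
  unfold distr
  rw [← Equiv.sum_comp (Fin.consEquiv (fun _ : Fin (d+1) => Bool))
    (fun v => if ((cnt v : ZMod M)) = r then Wgt a b v else 0)]
  rw [Fintype.sum_prod_type, Fintype.sum_bool]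
  simp only [Fin.consEquiv, Equiv.coe_fn_mk]
  have htrue : (∑ w : Fin d → Bool,
      if ((cnt (Fin.cons true w) : ℕ) : ZMod M) = r then Wgt a b (Fin.cons true w) else 0)
      = a * (∑ w : Fin d → Bool, if ((cnt w : ZMod M)) = r - 1 then Wgt a b w else 0) := by
    rw [Finset.mul_sum]
    refine Finset.sum_congr rfl fun w _ => ?_
    have hc : ((cnt (Fin.cons true w) : ℕ) : ZMod M) = 1 + (cnt w : ZMod M) := by
      rw [cnt_cons]; push_cast; norm_num
    have hw : Wgt a b (Fin.cons true w) = a * Wgt a b w := by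
      rw [Wgt_cons]; norm_num
    rw [hc, hw]
    by_cases h : ((cnt w : ZMod M)) = r - 1
    · rw [if_pos (by rw [h]; ring), if_pos h]
    · rw [if_neg (fun hc2 => h (by linear_combination hc2)), if_neg h, mul_zero]
  have hfalse : (∑ w : Fin d → Bool,
      if ((cnt (Fin.cons false w) : ℕ) : ZMod M) = r then Wgt a b (Fin.cons false w) else 0)
      = b * (∑ w : Fin d → Bool, if ((cnt w : ZMod M)) = r then Wgt a b w else 0) := by
    rw [Finset.mul_sum]
    refine Finset.sum_congr rfl fun w _ => ?_
    have hc : ((cnt (Fin.cons false w) : ℕ) : ZMod M) = (cnt w : ZMod M) := by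
      rw [cnt_cons]; push_cast; norm_num
    have hw : Wgt a b (Fin.cons false w) = b * Wgt a b w := by
      rw [Wgt_cons]; norm_num
    rw [hc, hw]
    by_cases h : ((cnt w : ZMod M)) = r
    · rw [if_pos h, if_pos h]
    · rw [if_neg h, if_neg h, mul_zero]
  exact (congrArg₂ (· + ·) htrue hfalse).trans (add_comm _ _)

lemma exists_cnt : ∀ d s : ℕ, s ≤ d → ∃ v : Fin d → Bool, cnt v = s := by
  intro d
  induction d with
  | zero =>
    intro s hs
    have : s = 0 := by omega
    subst this
    exact ⟨fun i => false, by simp [cnt]⟩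
  | succ d ih =>
    intro s hs
    rcases Nat.eq_zero_or_pos s with rfl | hpos
    · exact ⟨fun i => false, by simp [cnt]⟩
    · obtain ⟨w, hw⟩ := ih (s - 1) (by omega)
      refine ⟨Fin.cons true w, ?_⟩
      rw [cnt_cons, hw]
      simp; omega

lemma Wgt_pos (ha : 0 < a) (hb : 0 < b) {d : ℕ} (v : Fin d → Bool) : 0 < Wgt a b v := by
  rw [Wgt, CanonicallyOrderedAdd.prod_pos]
  intro i _
  split_ifs
  · exact ha
  · exact hb

lemma distr_pos [NeZero M] (ha : 0 < a) (hb : 0 < b) {d : ℕ} (r : ZMod M)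
    (h : r.val ≤ d) : 0 < distr a b M d r := by
  obtain ⟨v, hv⟩ := exists_cnt d r.val h
  have hcast : ((cnt v : ℕ) : ZMod M) = r := by
    rw [hv]; exact ZMod.natCast_rightInverse r
  calc (0:ℝ≥0∞) < Wgt a b v := Wgt_pos ha hb v
  _ = if ((cnt v : ZMod M)) = r then Wgt a b v else 0 := by rw [if_pos hcast]
  _ ≤ distr a b M d r := Finset.single_le_sum (f := fun v => if ((cnt v : ZMod M)) = r
      then Wgt a b v else 0) (fun _ _ => zero_le) (Finset.mem_univ v)

lemma distr_lower (hab : a + b = 1) {c : ℝ≥0∞} {d : ℕ}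
    (hc : ∀ r : ZMod M, c ≤ distr a b M d r) :
    ∀ e, ∀ r : ZMod M, c ≤ distr a b M (d + e) r := by
  intro e
  induction e with
  | zero => exact hc
  | succ e ih =>
    intro r
    rw [show d + (e+1) = (d+e)+1 by omega, distr_succ]
    calc c = (a + b) * c := by rw [hab, one_mul]
    _ = b * c + a * c := by ring
    _ ≤ b * distr a b M (d+e) r + a * distr a b M (d+e) (r-1) := by
        exact add_le_add (mul_le_mul_right (ih r) b) (mul_le_mul_right (ih (r-1)) a)

lemma distr_bad_le [NeZero M] (hab : a + b = 1) {c : ℝ≥0∞} {d : ℕ}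
    (S : Finset (ZMod M)) {r₀ : ZMod M} (hr₀ : r₀ ∉ S) (hc : c ≤ distr a b M d r₀) :
    ∑ r ∈ S, distr a b M d r ≤ 1 - c := by
  have h1 : ∑ r ∈ insert r₀ S, distr a b M d r ≤ 1 := by
    rw [← distr_sum_one (M := M) hab d]
    exact Finset.sum_le_sum_of_subset (Finset.subset_univ _)
  rw [Finset.sum_insert hr₀] at h1
  have h2 : c + ∑ r ∈ S, distr a b M d r ≤ 1 := by
    exact le_trans (add_le_add hc le_rfl) h1
  have hc1 : c ≤ 1 := le_trans hc (le_trans (self_le_add_right _ _) h1)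
  exact ENNReal.le_sub_of_add_le_left (ne_top_of_le_ne_top ENNReal.one_ne_top hc1) h2

lemma step_bound {α : ℝ} {μ : Measure (ℕ → Bool)} (hμ : IsBernoulli α μ)
    {M : ℕ} [NeZero M] {L d : ℕ}
    {A : Set (ℕ → Bool)} (hA : Det L A)
    (Good : Finset (ZMod M)) {g₀ : ZMod M} (hg₀ : g₀ ∈ Good)
    (hab : ENNReal.ofReal α + ENNReal.ofReal (1 - α) = 1)
    {c : ℝ≥0∞}
    (hc : ∀ r : ZMod M, c ≤ distr (ENNReal.ofReal α) (ENNReal.ofReal (1 - α)) M d r) :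
    μ (A ∩ {x | ¬ ((kpath x (L + d) : ZMod M) ∈ Good)}) ≤ (1 - c) * μ A := by
  set a := ENNReal.ofReal α with ha_def
  set b := ENNReal.ofReal (1 - α) with hb_def
  set B : Set (ℕ → Bool) := {x | ¬ ((kpath x (L + d) : ZMod M) ∈ Good)} with hB
  have hDet : Det (L + d) (A ∩ B) := by
    intro x y h
    have h1 : x ∈ A ↔ y ∈ A := hA x y (fun i hi => h i (by omega))
    have h2 : kpath x (L + d) = kpath y (L + d) := kpath_congr h
    simp only [Set.mem_inter_iff, hB, Set.mem_setOf_eq, h2, h1]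
  rw [measure_det hμ hDet, ← ha_def, ← hb_def]
  have reindex : ∑ p : (Fin L → Bool) × (Fin d → Bool),
      indW a b (A ∩ B) ((Fin.appendEquiv L d) p)
      = ∑ u : Fin (L + d) → Bool, indW a b (A ∩ B) u :=
    Fintype.sum_equiv (Fin.appendEquiv L d) _ _ (fun p => rfl)
  refine le_trans (le_of_eq reindex.symm) ?_
  rw [Fintype.sum_prod_type]
  simp only [Fin.appendEquiv, Equiv.coe_fn_mk]
  have inner : ∀ v : Fin L → Bool,
      (∑ w : Fin d → Bool, indW a b (A ∩ B) (Fin.append v w))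
      ≤ indW a b A v * (1 - c) := by
    intro v
    have hmem : ∀ w : Fin d → Bool, (extv (Fin.append v w) ∈ A ∩ B)
        ↔ (extv v ∈ A ∧ ¬ (((cnt v : ZMod M) + (cnt w : ZMod M)) ∈ Good)) := by
      intro w
      have hAe : extv (Fin.append v w) ∈ A ↔ extv v ∈ A :=
        hA _ _ (fun i hi => extv_append_lo v w hi)
      have hBe : kpath (extv (Fin.append v w)) (L + d) = cnt v + cnt w := by
        rw [← cnt_eq_kpath, cnt_append]
      simp only [Set.mem_inter_iff, hB, Set.mem_setOf_eq, hAe, hBe]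
      push_cast
      tauto
    by_cases hAv : extv v ∈ A
    · have hiA : indW a b A v = Wgt a b v := if_pos hAv
      rw [hiA]
      have key : ∀ w : Fin d → Bool,
          indW a b (A ∩ B) (Fin.append v w)
          = Wgt a b v * (if ¬ (((cnt v : ZMod M) + (cnt w : ZMod M)) ∈ Good)
              then Wgt a b w else 0) := by
        intro w
        unfold indW
        by_cases hw : ¬ (((cnt v : ZMod M) + (cnt w : ZMod M)) ∈ Good)
        · rw [if_pos ((hmem w).mpr ⟨hAv, hw⟩), if_pos hw, Wgt_append]
        · rw [if_neg (fun hcon => hw ((hmem w).mp hcon).2), if_neg hw, mul_zero]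
      rw [Finset.sum_congr rfl fun w _ => key w, ← Finset.mul_sum]
      refine mul_le_mul_right ?_ (Wgt a b v)
      rw [sum_pred_cnt_eq (fun r => ¬ (((cnt v : ZMod M) + r) ∈ Good)) d]
      refine distr_bad_le hab (Finset.univ.filter _) (r₀ := g₀ - (cnt v : ZMod M)) ?_ (hc _)
      simp only [Finset.mem_filter, Finset.mem_univ, true_and, not_not]
      rw [add_sub_cancel]
      exact hg₀
    · have hiA : indW a b A v = 0 := if_neg hAv
      rw [hiA, zero_mul]
      refine le_of_eq (Finset.sum_eq_zero fun w _ => ?_)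
      exact if_neg (fun hcon => hAv ((hmem w).mp hcon).1)
  calc ∑ v : Fin L → Bool, ∑ w : Fin d → Bool, indW a b (A ∩ B) (Fin.append v w)
      ≤ ∑ v : Fin L → Bool, indW a b A v * (1 - c) :=
        Finset.sum_le_sum fun v _ => inner v
  _ = (1 - c) * μ A := by
      rw [← Finset.sum_mul, mul_comm]
      congr 1
      rw [measure_det hμ hA, ha_def, hb_def]


theorem stmt12 (q : ℕ) (hq : q.Prime) (p : ℕ) (hp : p < q)
    (α : ℝ) (hα0 : 0 < α) (hα1 : α < 1)
    (μ : Measure (ℕ → Bool)) (hμ : IsBernoulli α μ) :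
    μ (⋃ n : ℕ, ⋃ _ : 1 ≤ n, F q n p) = 1 := by
  have hq2 : 2 ≤ q := hq.two_le
  set M := 2 * q with hM
  haveI : NeZero M := ⟨by omega⟩
  set a := ENNReal.ofReal α with ha_def
  set b := ENNReal.ofReal (1 - α) with hb_def
  have ha : 0 < a := ENNReal.ofReal_pos.mpr hα0
  have hb : 0 < b := ENNReal.ofReal_pos.mpr (by linarith)
  have hab : a + b = 1 := by
    rw [ha_def, hb_def, ← ENNReal.ofReal_add hα0.le (by linarith)]
    norm_num
  haveI hprob : IsProbabilityMeasure μ := hμ.1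
  -- the good residue classes
  set Good : Finset (ZMod M) :=
    Finset.univ.filter (fun r => gg q r.val = (p : ZMod q)) with hGood
  obtain ⟨cc, hcc, hggcc⟩ := gg_surj hq p hp
  have hg₀ : ((cc : ZMod M)) ∈ Good := by
    rw [hGood, Finset.mem_filter]
    refine ⟨Finset.mem_univ _, ?_⟩
    rw [ZMod.val_natCast]
    have hmm : cc % M = cc := Nat.mod_eq_of_lt (by omega)
    rw [hmm]
    exact hggcc
  -- characterization of F via Good
  have charF : ∀ n, 1 ≤ n → ∀ x : ℕ → Bool,
      (x ∈ F q n p ↔ ((kpath x (q ^ n - 2) : ZMod M) ∈ Good)) := by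
    intro n hn x
    have hk : kpath x (q ^ n - 2) ≤ q ^ n - 2 := kpath_le _ _
    have hform := choose_pow_sub_two hq n hn _ hk
    have hFmem : x ∈ F q n p ↔ gg q (kpath x (q ^ n - 2)) = (p : ZMod q) := by
      rw [F, Set.mem_setOf_eq, dpath, hform]
    rw [hFmem, hGood, Finset.mem_filter]
    rw [ZMod.val_natCast]
    have hmod : gg q (kpath x (q ^ n - 2) % M) = gg q (kpath x (q ^ n - 2)) :=
      (gg_mod q hq2 _).symm
    rw [hmod]
    exact ⟨fun h => ⟨Finset.mem_univ _, h⟩, fun h => h.2⟩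
  -- each F is determined by finitely many coordinates
  have detF : ∀ n, Det (q ^ n - 2) (F q n p) := by
    intro n x y h
    have : kpath x (q ^ n - 2) = kpath y (q ^ n - 2) := kpath_congr h
    simp only [F, Set.mem_setOf_eq, dpath, this]
  -- the exceptional sets
  set E : ℕ → Set (ℕ → Bool) :=
    fun m => {x | ∀ n, 1 ≤ n → n ≤ m → x ∉ F q n p} with hE
  have detE : ∀ m, Det (q ^ m - 2) (E m) := by
    intro m x y h
    simp only [hE, Set.mem_setOf_eq]
    constructor <;> intro hx n hn1 hn2
    · refine (detF n x y fun i hi => h i ?_).not.mp (hx n hn1 hn2)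
      have : q ^ n ≤ q ^ m := Nat.pow_le_pow_right (by omega) hn2
      omega
    · refine (detF n x y fun i hi => h i ?_).not.mpr (hx n hn1 hn2)
      have : q ^ n ≤ q ^ m := Nat.pow_le_pow_right (by omega) hn2
      omega
  have harith : ∀ m, 1 ≤ m → (q ^ m - 2) + (q ^ (m+1) - q ^ m) = q ^ (m+1) - 2 := by
    intro m hm
    have h1 : q ^ m ≤ q ^ (m+1) := Nat.pow_le_pow_right (by omega) (by omega)
    have h2 : q ≤ q ^ m := Nat.le_self_pow (by omega) q
    omega
  have hE_succ : ∀ m, 1 ≤ m → E (m+1)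
      = E m ∩ {x | ¬ ((kpath x ((q ^ m - 2) + (q ^ (m+1) - q ^ m)) : ZMod M) ∈ Good)} := by
    intro m hm
    ext x
    simp only [hE, Set.mem_setOf_eq, Set.mem_inter_iff, harith m hm]
    constructor
    · intro h
      refine ⟨fun n hn1 hn2 => h n hn1 (by omega), ?_⟩
      rw [← charF (m+1) (by omega) x]
      exact h (m+1) (by omega) (by omega)
    · rintro ⟨h1, h2⟩ n hn1 hn2
      rcases Nat.lt_or_ge n (m+1) with hlt | hge
      · exact h1 n hn1 (by omega)
      · have : n = m + 1 := by omega
        subst this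
        rw [charF (m+1) (by omega) x]
        exact h2
  -- the uniform lower bound on block distributions
  set c : ℝ≥0∞ := Finset.univ.inf' ⟨(0 : ZMod M), Finset.mem_univ 0⟩
    (distr a b M (M - 1)) with hc_def
  have hc_pos : 0 < c := by
    rw [hc_def]; refine (Finset.lt_inf'_iff _).mpr ?_
    intro r _
    refine distr_pos ha hb r ?_
    have := ZMod.val_lt r
    omega
  have hc_le : ∀ d, M - 1 ≤ d → ∀ r : ZMod M, c ≤ distr a b M d r := by
    intro d hd r
    obtain ⟨e, rfl⟩ : ∃ e, d = (M - 1) + e := ⟨d - (M-1), by omega⟩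
    exact distr_lower hab (fun r' => Finset.inf'_le _ (Finset.mem_univ r')) e r
  have hblock : ∀ m, 2 ≤ m → M - 1 ≤ q ^ (m+1) - q ^ m := by
    intro m hm
    have h2 : 2 * q ≤ q ^ m := by
      calc 2 * q ≤ q * q := Nat.mul_le_mul_right q (by omega)
      _ = q ^ 2 := (sq q).symm
      _ ≤ q ^ m := Nat.pow_le_pow_right (by omega) hm
    have e12 : q ^ m * (q - 1) + q ^ m = q ^ (m+1) := by
      have hq1 : q - 1 + 1 = q := by omega
      calc q ^ m * (q - 1) + q ^ m = q ^ m * ((q - 1) + 1) := by ring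
      _ = q ^ m * q := by rw [hq1]
      _ = q ^ (m+1) := (pow_succ q m).symm
    have h3 : q ^ m * 1 ≤ q ^ m * (q - 1) := Nat.mul_le_mul_left _ (by omega)
    omega
  -- geometric decay
  have decay : ∀ j : ℕ, μ (E (2 + j)) ≤ (1 - c) ^ j := by
    intro j
    induction j with
    | zero => simpa using prob_le_one
    | succ j ih =>
      have hstep := step_bound hμ (M := M) (detE (2 + j)) Good hg₀ hab
        (hc_le (q ^ (2+j+1) - q ^ (2+j)) (hblock (2+j) (by omega)))
      rw [← hE_succ (2+j) (by omega)] at hstep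
      have : (2 : ℕ) + (j + 1) = (2 + j) + 1 := by omega
      rw [this]
      calc μ (E ((2+j)+1)) ≤ (1 - c) * μ (E (2+j)) := hstep
      _ ≤ (1 - c) * (1 - c) ^ j := mul_le_mul_right ih _
      _ = (1 - c) ^ (j+1) := by rw [pow_succ, mul_comm]
  -- the complement of the union
  set U : Set (ℕ → Bool) := ⋃ n : ℕ, ⋃ _ : 1 ≤ n, F q n p with hU
  have hUc : ∀ m : ℕ, Uᶜ ⊆ E m := by
    intro m x hx n hn1 _
    intro hxF
    exact hx (Set.mem_iUnion.mpr ⟨n, Set.mem_iUnion.mpr ⟨hn1, hxF⟩⟩)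
  have hUc0 : μ Uᶜ = 0 := by
    have hbound : ∀ j : ℕ, μ Uᶜ ≤ (1 - c) ^ j :=
      fun j => le_trans (measure_mono (hUc (2 + j))) (decay j)
    have hlt1 : (1 : ℝ≥0∞) - c < 1 :=
      ENNReal.sub_lt_self ENNReal.one_ne_top one_ne_zero (ne_of_gt hc_pos)
    have htend : Tendsto (fun j : ℕ => (1 - c) ^ j) atTop (nhds 0) :=
      ENNReal.tendsto_pow_atTop_nhds_zero_of_lt_one hlt1
    have : μ Uᶜ ≤ 0 := ge_of_tendsto htend (Filter.Eventually.of_forall hbound)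
    exact le_antisymm this zero_le
  have hUmeas : MeasurableSet U := by
    refine MeasurableSet.iUnion fun n => MeasurableSet.iUnion fun _ => ?_
    exact det_measurable (detF n)
  have := measure_add_measure_compl (μ := μ) hUmeas
  rw [hUc0, add_zero] at this
  rw [this]
  exact measure_univ
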